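/- Let b ∈ (0,1), μ₀ ∈ ℝ, and let σ : (−π/2, π/2) → ℝ be continuously differentiable. Define μ : (−π/2, π/2) → ℝ by μ(θ) = μ₀ cos θ − (1/b) cos θ · ∫₀^θ σ'(s)/cos²(s) ds. Then the pair (σ, μ), regarded as functions of (θ,x) independent of x, satisfies the λ-equations: σ'(θ) + b cos θ · μ'(θ) + b sin θ · μ(θ) = 0 for all θ ∈ (−π/2, π/2), and both x-derivative equations hold trivially. -/

import Mathlib

/-!
Statement 4: the general solution `σ = σ(θ)`,
`μ(θ) = μ₀ cos θ − (1/b) cos θ ∫₀^θ σ'(s)/cos²(s) ds` satisfies the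
λ-equations of the inverted pendulum cart.
-/

noncomputable section

open Real Set

/-- Partial derivative in the `x` (second) direction. -/
def pdx (f : ℝ × ℝ → ℝ) (p : ℝ × ℝ) : ℝ := fderiv ℝ f p (0, 1)

lemma pdx_fst_comp (f : ℝ → ℝ) (p : ℝ × ℝ) (h : DifferentiableAt ℝ f p.1) :
    pdx (fun q => f q.1) p = 0 := by
  have h1 : HasFDerivAt (fun q : ℝ × ℝ => f q.1)
      ((fderiv ℝ f p.1).comp (ContinuousLinearMap.fst ℝ ℝ ℝ)) p :=
    h.hasFDerivAt.comp p hasFDerivAt_fst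
  simp [pdx, h1.fderiv]

theorem statement4 (b μ₀ : ℝ) (hb : b ∈ Ioo (0 : ℝ) 1)
    (σ : ℝ → ℝ) (hσ : ContDiffOn ℝ 1 σ (Ioo (-(π / 2)) (π / 2)))
    (μ : ℝ → ℝ)
    (hμ : ∀ θ, μ θ = μ₀ * Real.cos θ -
      (1 / b) * Real.cos θ * ∫ s in (0 : ℝ)..θ, deriv σ s / Real.cos s ^ 2) :
    (∀ θ ∈ Ioo (-(π / 2)) (π / 2),
      deriv σ θ + b * Real.cos θ * deriv μ θ + b * Real.sin θ * μ θ = 0) ∧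
    -- both `x`-derivative equations hold trivially, `σ` and `μ` being
    -- regarded as functions on `(−π/2, π/2) × ℝ` independent of `x`
    (∀ p : ℝ × ℝ, p.1 ∈ Ioo (-(π / 2)) (π / 2) →
      pdx (fun q => σ q.1) p + b * Real.cos p.1 * pdx (fun q => μ q.1) p = 0) := by
  obtain ⟨hb0, hb1⟩ := hb
  set I : Set ℝ := Ioo (-(π / 2)) (π / 2) with hIdef
  have hI : IsOpen I := isOpen_Ioo
  have h0I : (0 : ℝ) ∈ I := ⟨by linarith [pi_div_two_pos], pi_div_two_pos⟩
  have hcosne : ∀ s ∈ I, Real.cos s ≠ 0 := fun s hs =>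
    (Real.cos_pos_of_mem_Ioo hs).ne'
  set g : ℝ → ℝ := fun s => deriv σ s / Real.cos s ^ 2 with hgdef
  have hgcont : ContinuousOn g I := by
    apply ContinuousOn.div
    · exact hσ.continuousOn_deriv_of_isOpen hI le_rfl
    · exact (Real.continuous_cos.pow 2).continuousOn
    · intro s hs; exact pow_ne_zero 2 (hcosne s hs)
  set F : ℝ → ℝ := fun θ => ∫ s in (0 : ℝ)..θ, g s with hFdef
  have hFderiv : ∀ θ ∈ I, HasDerivAt F (g θ) θ := by
    intro θ hθ
    have hsub : uIcc (0 : ℝ) θ ⊆ I := by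
      have : OrdConnected I := ordConnected_Ioo
      exact this.uIcc_subset h0I hθ
    refine intervalIntegral.integral_hasDerivAt_right
      ((hgcont.mono hsub).intervalIntegrable)
      (hgcont.stronglyMeasurableAtFilter hI θ hθ)
      (hgcont.continuousAt (hI.mem_nhds hθ))
  have hμderiv : ∀ θ ∈ I, HasDerivAt μ
      (μ₀ * (-Real.sin θ) -
        ((1 / b) * (-Real.sin θ) * F θ + (1 / b) * Real.cos θ * g θ)) θ := by
    intro θ hθ
    have hμeq : μ = fun θ => μ₀ * Real.cos θ - (1 / b) * Real.cos θ * F θ :=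
      funext hμ
    rw [hμeq]
    have h1 : HasDerivAt (fun θ => μ₀ * Real.cos θ) (μ₀ * (-Real.sin θ)) θ :=
      (Real.hasDerivAt_cos θ).const_mul μ₀
    have h2 : HasDerivAt (fun θ => (1 / b) * Real.cos θ) ((1 / b) * (-Real.sin θ)) θ :=
      (Real.hasDerivAt_cos θ).const_mul (1 / b)
    exact h1.sub (h2.mul (hFderiv θ hθ))
  constructor
  · intro θ hθ
    have hd := hμderiv θ hθ
    rw [hd.deriv, hμ θ]
    show deriv σ θ + b * Real.cos θ *
      (μ₀ * (-Real.sin θ) - ((1 / b) * (-Real.sin θ) * F θ + (1 / b) * Real.cos θ * g θ))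
      + b * Real.sin θ * (μ₀ * Real.cos θ - 1 / b * Real.cos θ * F θ) = 0
    have hc := hcosne θ hθ
    rw [hgdef]
    field_simp
    ring
  · intro p hp
    have hσd : DifferentiableAt ℝ σ p.1 :=
      ((hσ.differentiableOn one_ne_zero).differentiableAt (hI.mem_nhds hp))
    have hμd : DifferentiableAt ℝ μ p.1 := (hμderiv p.1 hp).differentiableAt
    rw [pdx_fst_comp σ p hσd, pdx_fst_comp μ p hμd]
    ring
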